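/- Let A ⊆ ℝⁿ (n ≥ 2) be orthogonally convex with finite positive Lebesgue measure, and let X be uniform on A. Then the erosion entropy satisfies h_{⊖[0,1]ⁿ}(A) ≤ (n-1)·log₂ E[‖X‖_∞] - log₂ Vₙ(A) + 4n. -/

import Mathlib

open MeasureTheory

/-- The Minkowski erosion `A ⊖ B = {x : B + x ⊆ A}`. -/
def erosion {n : ℕ} (A B : Set (Fin n → ℝ)) : Set (Fin n → ℝ) :=
  {x | ∀ b ∈ B, b + x ∈ A}

/-- The erosion entropy `h_{⊖[0,1]ⁿ}(A) = ∫ (1{t≥0} - Vₙ(A ⊖ [0,2^{-t}]ⁿ)/Vₙ(A)) dt`. -/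
noncomputable def erosionEntropy (n : ℕ) (A : Set (Fin n → ℝ)) : ℝ :=
  ∫ t : ℝ, ((if 0 ≤ t then (1 : ℝ) else 0) -
    (volume (erosion A {x : Fin n → ℝ | ∀ i, x i ∈ Set.Icc (0 : ℝ) ((2 : ℝ) ^ (-t))})).toReal
      / (volume A).toReal)

/-- `A` is orthogonally convex if its intersection with every line parallel to a coordinate
axis is connected. -/
def OrthoConvex (n : ℕ) (A : Set (Fin n → ℝ)) : Prop :=
  ∀ (i : Fin n) (x : Fin n → ℝ), Set.OrdConnected {t : ℝ | Function.update x i t ∈ A}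

open scoped ENNReal

namespace Stmt18

open Set

variable {n : ℕ}

/-- the cube `[0,ε]^n` -/
def cube (n : ℕ) (ε : ℝ) : Set (Fin n → ℝ) := {x | ∀ i, x i ∈ Set.Icc 0 ε}

noncomputable def vtx (n : ℕ) (ε : ℝ) (s : Finset (Fin n)) : Fin n → ℝ :=
  fun j => if j ∈ s then ε else 0

noncomputable def sing (n : ℕ) (ε : ℝ) (k : ℕ) : Fin n → ℝ :=
  fun j => if (j : ℕ) = k then ε else 0

def box (n : ℕ) (R : ℝ) : Set (Fin n → ℝ) := Set.pi Set.univ (fun _ => Set.Icc (-R) R)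

lemma mem_box {R : ℝ} {x : Fin n → ℝ} : x ∈ box n R ↔ ∀ j, x j ∈ Set.Icc (-R) R := by
  rw [box, Set.mem_univ_pi]

lemma ordConnected_translate {s : Set ℝ} (h : s.OrdConnected) (c : ℝ) :
    OrdConnected {t : ℝ | t + c ∈ s} := by
  constructor
  intro t1 h1 t2 h2 t ht
  exact h.out h1 h2 ⟨add_le_add_left ht.1 c, add_le_add_left ht.2 c⟩

lemma vertex_fill {B : Set (Fin n → ℝ)} (hB : OrthoConvex n B) {ε : ℝ}
    (x : Fin n → ℝ) (s : Finset (Fin n)) :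
    ∀ b : Fin n → ℝ, (∀ i, b i ∈ Set.Icc 0 ε) →
      (∀ i ∉ s, b i = 0 ∨ b i = ε) →
      (∀ u : Finset (Fin n), x + vtx n ε u ∈ B) → x + b ∈ B := by
  classical
  induction s using Finset.induction with
  | empty =>
      intro b hb hfree hv
      have hbv : b = vtx n ε (Finset.univ.filter fun i => b i = ε) := by
        funext j
        by_cases hj : b j = ε
        · simp [vtx, hj]
        · have h0 : b j = 0 := (hfree j (by simp)).resolve_right hj
          simp only [vtx, Finset.mem_filter, Finset.mem_univ, true_and, h0]
          rcases eq_or_ne (0:ℝ) ε with hz | hz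
          · simp [← hz]
          · simp [hz]
      rw [hbv]; exact hv _
  | insert a s hnotmem ih =>
      intro b hb hfree hv
      have hε : 0 ≤ ε := le_trans (hb a).1 (hb a).2
      set b0 := Function.update b a 0 with hb0
      set b1 := Function.update b a ε with hb1
      have m0 : x + b0 ∈ B := by
        refine ih b0 ?_ ?_ hv
        · intro i
          by_cases h : i = a
          · subst h; simp [hb0, Function.update_self]; exact hε
          · simpa [hb0, Function.update_of_ne h] using hb i
        · intro i hi
          by_cases h : i = a
          · subst h; left; simp [hb0]
          · rw [hb0, Function.update_of_ne h]
            exact hfree i (by simp [h, hi])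
      have m1 : x + b1 ∈ B := by
        refine ih b1 ?_ ?_ hv
        · intro i
          by_cases h : i = a
          · subst h; simp [hb1, Function.update_self]; exact hε
          · simpa [hb1, Function.update_of_ne h] using hb i
        · intro i hi
          by_cases h : i = a
          · subst h; right; simp [hb1]
          · rw [hb1, Function.update_of_ne h]
            exact hfree i (by simp [h, hi])
      have hsec := hB a (x + b)
      have e0 : Function.update (x + b) a (x a + 0) = x + b0 := by
        funext j
        by_cases h : j = a
        · subst h; simp [hb0]
        · simp [hb0, Function.update_of_ne h]
      have e1 : Function.update (x + b) a (x a + ε) = x + b1 := by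
        funext j
        by_cases h : j = a
        · subst h; simp [hb1]
        · simp [hb1, Function.update_of_ne h]
      have eb : Function.update (x + b) a (x a + b a) = x + b := by
        funext j
        by_cases h : j = a
        · subst h; simp
        · simp [Function.update_of_ne h]
      have h0' : (x a + 0) ∈ {t : ℝ | Function.update (x + b) a t ∈ B} := by
        rw [Set.mem_setOf_eq, e0]; exact m0
      have h1' : (x a + ε) ∈ {t : ℝ | Function.update (x + b) a t ∈ B} := by
        rw [Set.mem_setOf_eq, e1]; exact m1
      have hmem := hsec.out h0' h1'
        ⟨add_le_add_right (hb a).1 _, add_le_add_right (hb a).2 _⟩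
      rw [Set.mem_setOf_eq, eb] at hmem
      exact hmem

def chain (A : Set (Fin n → ℝ)) (ε : ℝ) : ℕ → Set (Fin n → ℝ)
  | 0 => A
  | k+1 => chain A ε k ∩ {x | x + sing n ε k ∈ chain A ε k}

lemma chain_subset (A : Set (Fin n → ℝ)) (ε : ℝ) : ∀ k, chain A ε k ⊆ A
  | 0 => le_refl A
  | k+1 => Set.inter_subset_left.trans (chain_subset A ε k)

lemma chain_measurable {A : Set (Fin n → ℝ)} (hA : MeasurableSet A) (ε : ℝ) :
    ∀ k, MeasurableSet (chain A ε k)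
  | 0 => hA
  | k+1 => by
      have hk := chain_measurable hA ε k
      exact hk.inter (hk.preimage (measurable_add_const _))

lemma chain_orthoConvex {A : Set (Fin n → ℝ)} (hoc : OrthoConvex n A) (ε : ℝ) :
    ∀ k, OrthoConvex n (chain A ε k)
  | 0 => hoc
  | k+1 => by
      intro i x
      have IH := chain_orthoConvex hoc ε k
      have : {t : ℝ | Function.update x i t ∈ chain A ε (k+1)} =
          {t : ℝ | Function.update x i t ∈ chain A ε k} ∩
          {t : ℝ | Function.update x i t + sing n ε k ∈ chain A ε k} := by
        ext t; simp [chain, Set.mem_setOf_eq, Set.mem_inter_iff]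
      rw [this]
      refine (IH i x).inter ?_
      by_cases hik : (i : ℕ) = k
      · have e : ∀ t : ℝ, Function.update x i t + sing n ε k
            = Function.update x i (t + ε) := by
          intro t
          funext j
          by_cases h : j = i
          · subst h; simp [sing, hik]
          · have : (j : ℕ) ≠ k := by
              rw [← hik]; exact fun hc => h (Fin.val_injective hc)
            simp [sing, this, Function.update_of_ne h]
        have : {t : ℝ | Function.update x i t + sing n ε k ∈ chain A ε k} =
            {t : ℝ | t + ε ∈ {u : ℝ | Function.update x i u ∈ chain A ε k}} := by
          ext t; rw [Set.mem_setOf_eq, e t]; rfl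
        rw [this]
        exact ordConnected_translate (IH i x) ε
      · have e : ∀ t : ℝ, Function.update x i t + sing n ε k
            = Function.update (x + sing n ε k) i t := by
          intro t
          funext j
          by_cases h : j = i
          · subst h; simp [sing, hik]
          · simp [Function.update_of_ne h]
        have : {t : ℝ | Function.update x i t + sing n ε k ∈ chain A ε k} =
            {t : ℝ | Function.update (x + sing n ε k) i t ∈ chain A ε k} := by
          ext t; rw [Set.mem_setOf_eq, e t]; rfl
        rw [this]
        exact IH i (x + sing n ε k)

lemma chain_vtx {A : Set (Fin n → ℝ)} (ε : ℝ) :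
    ∀ k (x : Fin n → ℝ), x ∈ chain A ε k → ∀ s : Finset (Fin n),
      (∀ j ∈ s, (j : ℕ) < k) → x + vtx n ε s ∈ A := by
  classical
  intro k
  induction k with
  | zero =>
      intro x hx s hs
      have hse : s = ∅ :=
        Finset.eq_empty_of_forall_notMem (fun j hj => absurd (hs j hj) (Nat.not_lt_zero _))
      subst hse
      have : vtx n ε (∅ : Finset (Fin n)) = 0 := by funext j; simp [vtx]
      rw [this, add_zero]
      exact hx
  | succ k ih =>
      intro x hx s hs
      by_cases hk : ∀ j ∈ s, (j : ℕ) < k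
      · exact ih x hx.1 s hk
      · push_neg at hk
        obtain ⟨j₀, hj₀s, hj₀⟩ := hk
        have hj₀k : (j₀ : ℕ) = k := le_antisymm (Nat.lt_succ_iff.mp (hs j₀ hj₀s)) hj₀
        have key : x + vtx n ε s = (x + sing n ε k) + vtx n ε (s.erase j₀) := by
          funext j
          by_cases h : j = j₀
          · subst h
            simp [vtx, sing, hj₀s, hj₀k]
          · have hjk : (j : ℕ) ≠ k := by
              rw [← hj₀k]; exact fun hc => h (Fin.val_injective hc)
            have : (j ∈ s.erase j₀) = (j ∈ s) := by
              simp [Finset.mem_erase, h]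
            simp [vtx, sing, hjk, this]
        rw [key]
        refine ih (x + sing n ε k) hx.2 (s.erase j₀) ?_
        intro j hj
        have hjs := Finset.mem_of_mem_erase hj
        have hjne := Finset.ne_of_mem_erase hj
        have : (j : ℕ) ≠ k := by
          rw [← hj₀k]; exact fun hc => hjne (Fin.val_injective hc)
        exact lt_of_le_of_ne (Nat.lt_succ_iff.mp (hs j hjs)) this

lemma chain_subset_erosion {A : Set (Fin n → ℝ)} (hoc : OrthoConvex n A) {ε : ℝ} :
    chain A ε n ⊆ erosion A (cube n ε) := by
  intro x hx b hb
  rw [show b + x = x + b from add_comm b x]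
  refine vertex_fill hoc x Finset.univ b hb (fun i hi => absurd (Finset.mem_univ i) hi) ?_
  intro u
  exact chain_vtx ε n x hx u (fun j _ => j.isLt)


lemma measurableSet_box (R : ℝ) : MeasurableSet (box n R) :=
  MeasurableSet.univ_pi (fun _ => measurableSet_Icc)

lemma volume_box {R : ℝ} (hR : 0 ≤ R) : volume (box n R) = ENNReal.ofReal (2*R) ^ n := by
  rw [box, volume_pi_pi]
  simp [Real.volume_Icc]
  congr 1
  rw [← two_mul, ENNReal.ofReal_mul (by norm_num : (0:ℝ) ≤ 2), ENNReal.ofReal_ofNat]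

lemma step_loss {B : Set (Fin n → ℝ)} (hB : MeasurableSet B) (hoc : OrthoConvex n B)
    {R ε : ℝ} (hR : 0 < R) (hε : 0 < ε) (hBQ : B ⊆ box n R) {k : ℕ} (hk : k < n) :
    volume (B \ {x | x + sing n ε k ∈ B}) ≤ ENNReal.ofReal (ε * (2*R)^(n-1)) := by
  classical
  set i : Fin n := ⟨k, hk⟩ with hi
  set w := sing n ε k with hw
  have hwi : w i = ε := by simp [hw, sing, hi]
  have hwj : ∀ j : Fin n, j ≠ i → w j = 0 := by
    intro j hj
    have : (j : ℕ) ≠ k := by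
      intro hc
      exact hj (Fin.val_injective (by simp [hi, hc]))
    simp [hw, sing, this]
  set D := B \ {x | x + w ∈ B} with hD
  have hDm : MeasurableSet D := hB.diff (hB.preimage (measurable_add_const w))
  -- key exclusion
  have key : ∀ (x : Fin n → ℝ) (c : ℕ), 1 ≤ c → x ∈ D → x + (c:ℝ) • w ∉ D := by
    intro x c hc hx hy
    have hxB : x ∈ B := hx.1
    have hxw : x + w ∉ B := hx.2
    have hyB : x + (c:ℝ) • w ∈ B := hy.1
    have hsec := hoc i x
    have e1 : Function.update x i (x i) = x := Function.update_eq_self i x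
    have e2 : Function.update x i (x i + (c:ℝ)*ε) = x + (c:ℝ) • w := by
      funext j
      by_cases h : j = i
      · subst h; simp [hwi]
      · simp [Function.update_of_ne h, hwj j h]
    have e3 : Function.update x i (x i + ε) = x + w := by
      funext j
      by_cases h : j = i
      · subst h; simp [hwi]
      · simp [Function.update_of_ne h, hwj j h]
    have h0 : x i ∈ {t : ℝ | Function.update x i t ∈ B} := by
      rw [Set.mem_setOf_eq, e1]; exact hxB
    have h1 : x i + (c:ℝ)*ε ∈ {t : ℝ | Function.update x i t ∈ B} := by
      rw [Set.mem_setOf_eq, e2]; exact hyB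
    have hcc : (1:ℝ) ≤ (c:ℝ) := by exact_mod_cast hc
    have hmem := hsec.out h0 h1
      ⟨le_add_of_nonneg_right (le_of_lt hε), by nlinarith⟩
    rw [Set.mem_setOf_eq, e3] at hmem
    exact hxw hmem
  -- translated copies
  set T : ℕ → Set (Fin n → ℝ) := fun m => (fun z => z + (-(m:ℝ)) • w) ⁻¹' D with hT
  have hTm : ∀ m, MeasurableSet (T m) := fun m => hDm.preimage (measurable_add_const _)
  have hTvol : ∀ m, volume (T m) = volume D := fun m =>
    measure_preimage_add_right volume _ D
  have hdisj : ∀ a b : ℕ, a < b → Disjoint (T a) (T b) := by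
    intro a b hab
    rw [Set.disjoint_left]
    intro z hza hzb
    have hx : z + (-(b:ℝ)) • w ∈ D := hzb
    have hy : z + (-(a:ℝ)) • w ∈ D := hza
    have hba : 1 ≤ b - a := by omega
    refine key (z + (-(b:ℝ)) • w) (b - a) hba hx ?_
    have : (z + (-(b:ℝ)) • w) + ((((b - a : ℕ)):ℝ)) • w = z + (-(a:ℝ)) • w := by
      rw [Nat.cast_sub (le_of_lt hab)]
      module
    rw [this]
    exact hy
  -- big box
  have hsubK : ∀ K : ℕ, ∀ m ∈ Finset.range K, T m ⊆
      Set.pi Set.univ (fun j => if j = i then Set.Icc (-R) (R + K*ε) else Set.Icc (-R) R) := by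
    intro K m hm z hz
    have hmem : z + (-(m:ℝ)) • w ∈ box n R := hBQ (hz.1 : _ ∈ B)
    rw [mem_box] at hmem
    rw [Set.mem_univ_pi]
    intro j
    by_cases h : j = i
    · subst h
      have := hmem i
      simp only [Pi.add_apply, Pi.smul_apply, smul_eq_mul, hwi] at this
      have hmK : (m:ℝ) ≤ K := by
        exact_mod_cast le_of_lt (Finset.mem_range.mp hm)
      have hm0 : (0:ℝ) ≤ m := Nat.cast_nonneg m
      rw [if_pos rfl]
      constructor
      · nlinarith [this.1]
      · nlinarith [this.2]
    · have := hmem j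
      simp only [Pi.add_apply, Pi.smul_apply, smul_eq_mul, hwj j h] at this
      rw [if_neg h]
      simpa using this
  have hbigvol : ∀ K : ℕ,
      volume (Set.pi Set.univ (fun j => if j = i then Set.Icc (-R) (R + K*ε) else Set.Icc (-R) R))
        = ENNReal.ofReal (2*R + K*ε) * ENNReal.ofReal (2*R) ^ (n-1) := by
    intro K
    rw [volume_pi_pi]
    have h1 : ∀ j : Fin n, volume (if j = i then Set.Icc (-R) (R + (K:ℝ)*ε) else Set.Icc (-R) R)
        = if j = i then ENNReal.ofReal (2*R + K*ε) else ENNReal.ofReal (2*R) := by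
      intro j
      split
      · rw [Real.volume_Icc]; congr 1; ring
      · rw [Real.volume_Icc]; congr 1; ring
    rw [Finset.prod_congr rfl (fun j _ => h1 j)]
    rw [← Finset.mul_prod_erase Finset.univ _ (Finset.mem_univ i), if_pos rfl]
    congr 1
    rw [Finset.prod_congr rfl (fun j hj => if_neg (Finset.ne_of_mem_erase hj))]
    rw [Finset.prod_const, Finset.card_erase_of_mem (Finset.mem_univ i), Finset.card_univ,
      Fintype.card_fin]
  have hKbound : ∀ K : ℕ, (K : ℝ≥0∞) * volume D ≤
      ENNReal.ofReal (2*R + K*ε) * ENNReal.ofReal (2*R) ^ (n-1) := by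
    intro K
    have hd : (↑(Finset.range K) : Set ℕ).PairwiseDisjoint T := by
      intro a ha b hb hab
      rcases lt_or_gt_of_ne hab with h | h
      · exact hdisj a b h
      · exact (hdisj b a h).symm
    have := measure_biUnion_finset (μ := volume) hd (fun m _ => hTm m)
    have hsum : ∑ m ∈ Finset.range K, volume (T m) = (K : ℝ≥0∞) * volume D := by
      rw [Finset.sum_congr rfl (fun m _ => hTvol m), Finset.sum_const, Finset.card_range,
        nsmul_eq_mul]
    rw [hsum] at this
    rw [← this, ← hbigvol K]
    refine measure_mono ?_
    exact Set.iUnion₂_subset (hsubK K)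
  -- pass to the limit
  have hDfin : volume D ≠ ⊤ := by
    have : volume D ≤ volume (box n R) := measure_mono (fun x hx => hBQ hx.1)
    rw [volume_box (le_of_lt hR)] at this
    exact ne_top_of_le_ne_top (ENNReal.pow_ne_top ENNReal.ofReal_ne_top) this
  set v := (volume D).toReal with hv
  have hreal : ∀ K : ℕ, (K:ℝ) * v ≤ (2*R + K*ε) * (2*R)^(n-1) := by
    intro K
    have := hKbound K
    have h2R : (0:ℝ) ≤ 2*R := by linarith
    have hrhs : (ENNReal.ofReal (2*R + K*ε) * ENNReal.ofReal (2*R) ^ (n-1)).toReal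
        = (2*R + K*ε) * (2*R)^(n-1) := by
      rw [ENNReal.toReal_mul, ENNReal.toReal_pow, ENNReal.toReal_ofReal (by positivity),
        ENNReal.toReal_ofReal h2R]
    have hlhs : ((K : ℝ≥0∞) * volume D).toReal = (K:ℝ) * v := by
      rw [ENNReal.toReal_mul, ENNReal.toReal_natCast, hv]
    calc (K:ℝ) * v = ((K : ℝ≥0∞) * volume D).toReal := hlhs.symm
      _ ≤ (ENNReal.ofReal (2*R + K*ε) * ENNReal.ofReal (2*R) ^ (n-1)).toReal :=
          ENNReal.toReal_mono (ENNReal.mul_ne_top ENNReal.ofReal_ne_top (ENNReal.pow_ne_top ENNReal.ofReal_ne_top)) this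
      _ = (2*R + K*ε) * (2*R)^(n-1) := hrhs
  have hvle : v ≤ ε * (2*R)^(n-1) := by
    by_contra hcon
    push_neg at hcon
    set c := ε * (2*R)^(n-1) with hc
    set δ := v - c with hδ
    have hδpos : 0 < δ := by simp [hδ]; linarith
    obtain ⟨K, hK⟩ := exists_nat_gt ((2*R) * (2*R)^(n-1) / δ)
    have hKpos : (0:ℝ) < K := lt_of_le_of_lt (by positivity) hK
    have h1 := hreal K
    have h2 : (2*R) * (2*R)^(n-1) < K * δ := by
      rw [div_lt_iff₀ hδpos] at hK
      linarith
    nlinarith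
  calc volume D = ENNReal.ofReal v := (ENNReal.ofReal_toReal hDfin).symm
    _ ≤ ENNReal.ofReal (ε * (2*R)^(n-1)) := ENNReal.ofReal_le_ofReal hvle



lemma box_orthoConvex (R : ℝ) : OrthoConvex n (box n R) := by
  intro i x
  constructor
  intro t1 h1 t2 h2 t ht
  rw [Set.mem_setOf_eq, mem_box]
  intro j
  by_cases h : j = i
  · subst h
    have hb1 := (mem_box.mp h1) j
    have hb2 := (mem_box.mp h2) j
    rw [Function.update_self] at hb1 hb2 ⊢
    exact ⟨le_trans hb1.1 ht.1, le_trans ht.2 hb2.2⟩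
  · have hb1 := (mem_box.mp h1) j
    rw [Function.update_of_ne h] at hb1 ⊢
    exact hb1

lemma orthoConvex_inter_box {A : Set (Fin n → ℝ)} (hoc : OrthoConvex n A) (R : ℝ) :
    OrthoConvex n (A ∩ box n R) := by
  intro i x
  have : {t : ℝ | Function.update x i t ∈ A ∩ box n R} =
      {t : ℝ | Function.update x i t ∈ A} ∩ {t : ℝ | Function.update x i t ∈ box n R} := rfl
  rw [this]
  exact (hoc i x).inter (box_orthoConvex R i x)

lemma erosion_mono {A A' B : Set (Fin n → ℝ)} (h : A ⊆ A') :
    erosion A B ⊆ erosion A' B := fun _ hx b hb => h (hx b hb)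

lemma chain_volume_le {A : Set (Fin n → ℝ)} (hA : MeasurableSet A) (hoc : OrthoConvex n A)
    {R ε : ℝ} (hR : 0 < R) (hε : 0 < ε) (hBQ : A ⊆ box n R) :
    volume A ≤ volume (chain A ε n) + (n : ℝ≥0∞) * ENNReal.ofReal (ε * (2*R)^(n-1)) := by
  have step : ∀ k, k < n → volume (chain A ε k) ≤
      volume (chain A ε (k+1)) + ENNReal.ofReal (ε * (2*R)^(n-1)) := by
    intro k hk
    have hsub : chain A ε k ⊆ chain A ε (k+1) ∪
        (chain A ε k \ {x | x + sing n ε k ∈ chain A ε k}) := by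
      intro x hx
      by_cases h : x + sing n ε k ∈ chain A ε k
      · left; exact ⟨hx, h⟩
      · right; exact ⟨hx, h⟩
    calc volume (chain A ε k)
        ≤ volume (chain A ε (k+1) ∪ (chain A ε k \ {x | x + sing n ε k ∈ chain A ε k})) :=
          measure_mono hsub
      _ ≤ volume (chain A ε (k+1)) +
          volume (chain A ε k \ {x | x + sing n ε k ∈ chain A ε k}) := measure_union_le _ _
      _ ≤ volume (chain A ε (k+1)) + ENNReal.ofReal (ε * (2*R)^(n-1)) := by
          refine add_le_add_right ?_ _
          exact step_loss (chain_measurable hA ε k) (chain_orthoConvex hoc ε k) hR hε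
            ((chain_subset A ε k).trans hBQ) hk
  have main : ∀ k, k ≤ n → volume A ≤
      volume (chain A ε k) + (k : ℝ≥0∞) * ENNReal.ofReal (ε * (2*R)^(n-1)) := by
    intro k
    induction k with
    | zero => intro _; simp [chain]
    | succ k ih =>
        intro hk1
        have hk : k < n := Nat.lt_of_succ_le hk1
        calc volume A ≤ volume (chain A ε k) + (k : ℝ≥0∞) * ENNReal.ofReal (ε * (2*R)^(n-1)) :=
              ih (le_of_lt hk)
          _ ≤ (volume (chain A ε (k+1)) + ENNReal.ofReal (ε * (2*R)^(n-1))) +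
              (k : ℝ≥0∞) * ENNReal.ofReal (ε * (2*R)^(n-1)) := add_le_add_left (step k hk) _
          _ = volume (chain A ε (k+1)) + (((k+1:ℕ)) : ℝ≥0∞) * ENNReal.ofReal (ε * (2*R)^(n-1)) := by
              push_cast
              ring
    
  exact main n (le_refl n)

lemma core_ineq {A : Set (Fin n → ℝ)} (hA : MeasurableSet A) (hoc : OrthoConvex n A)
    {R ε : ℝ} (hR : 0 < R) (hε : 0 < ε) :
    volume A ≤ volume (erosion A (cube n ε)) + volume (A \ box n R)
      + (n : ℝ≥0∞) * ENNReal.ofReal (ε * (2*R)^(n-1)) := by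
  set A' := A ∩ box n R with hA'
  have hA'm : MeasurableSet A' := hA.inter (measurableSet_box R)
  have hA'oc : OrthoConvex n A' := orthoConvex_inter_box hoc R
  have hA'Q : A' ⊆ box n R := Set.inter_subset_right
  have h1 : volume A ≤ volume (A \ box n R) + volume A' := by
    refine le_trans (measure_mono ?_) (measure_union_le _ _)
    intro x hx
    by_cases h : x ∈ box n R
    · right; exact ⟨hx, h⟩
    · left; exact ⟨hx, h⟩
  have h2 := chain_volume_le hA'm hA'oc hR hε hA'Q
  have h3 : volume (chain A' ε n) ≤ volume (erosion A (cube n ε)) := by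
    refine measure_mono ?_
    exact (chain_subset_erosion hA'oc).trans (erosion_mono Set.inter_subset_left)
  calc volume A ≤ volume (A \ box n R) + volume A' := h1
    _ ≤ volume (A \ box n R) +
        (volume (chain A' ε n) + (n : ℝ≥0∞) * ENNReal.ofReal (ε * (2*R)^(n-1))) :=
          add_le_add_right h2 _
    _ ≤ volume (A \ box n R) +
        (volume (erosion A (cube n ε)) + (n : ℝ≥0∞) * ENNReal.ofReal (ε * (2*R)^(n-1))) := by
          exact add_le_add_right (add_le_add_left h3 _) _
    _ = volume (erosion A (cube n ε)) + volume (A \ box n R)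
        + (n : ℝ≥0∞) * ENNReal.ofReal (ε * (2*R)^(n-1)) := by ring

lemma markov {A : Set (Fin n → ℝ)} (hA : MeasurableSet A) (hfin : volume A ≠ ⊤)
    (hInt : IntegrableOn (fun x => ‖x‖) A volume) {R : ℝ} (hR : 0 < R) :
    (volume (A \ box n R)).toReal ≤ (∫ x in A, ‖x‖) / R := by
  have hsub : A \ box n R ⊆ {x : Fin n → ℝ | R ≤ ‖x‖} ∩ A := by
    intro x hx
    refine ⟨?_, hx.1⟩
    rw [Set.mem_setOf_eq]
    have : ¬ (∀ j, x j ∈ Set.Icc (-R) R) := fun h => hx.2 (mem_box.mpr h)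
    push_neg at this
    obtain ⟨j, hj⟩ := this
    rw [Set.mem_Icc] at hj
    push_neg at hj
    have habs : R ≤ |x j| := by
      rcases le_or_gt (-R) (x j) with h | h
      · have := hj h
        rw [abs_of_nonneg (by linarith)]  
        exact le_of_lt this
      · rw [abs_of_neg (by linarith)]
        linarith
    calc R ≤ |x j| := habs
      _ = ‖x j‖ := (Real.norm_eq_abs _).symm
      _ ≤ ‖x‖ := norm_le_pi_norm x j
  have hmk := mul_meas_ge_le_integral_of_nonneg (μ := volume.restrict A)
    (f := fun x => ‖x‖) (Filter.Eventually.of_forall (fun x => norm_nonneg x)) hInt R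
  have hms : MeasurableSet {x : Fin n → ℝ | R ≤ ‖x‖} :=
    (isClosed_le continuous_const continuous_norm).measurableSet
  rw [measureReal_def, Measure.restrict_apply hms] at hmk
  have hv1 : volume (A \ box n R) ≤ volume ({x : Fin n → ℝ | R ≤ ‖x‖} ∩ A) :=
    measure_mono hsub
  have hfin2 : volume ({x : Fin n → ℝ | R ≤ ‖x‖} ∩ A) ≠ ⊤ :=
    ne_top_of_le_ne_top hfin (measure_mono Set.inter_subset_right)
  have hreal : (volume (A \ box n R)).toReal ≤ (volume ({x : Fin n → ℝ | R ≤ ‖x‖} ∩ A)).toReal :=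
    ENNReal.toReal_mono hfin2 hv1
  rw [le_div_iff₀ hR]
  calc (volume (A \ box n R)).toReal * R
      ≤ (volume ({x : Fin n → ℝ | R ≤ ‖x‖} ∩ A)).toReal * R := by
        exact mul_le_mul_of_nonneg_right hreal (le_of_lt hR)
    _ = R * (volume ({x : Fin n → ℝ | R ≤ ‖x‖} ∩ A)).toReal := mul_comm _ _
    _ ≤ ∫ x in A, ‖x‖ := hmk

lemma vol_le_of_mem_erosion {A : Set (Fin n → ℝ)} {s : ℝ} (hs : 0 ≤ s) {x : Fin n → ℝ}
    (hx : x ∈ erosion A (cube n s)) : ENNReal.ofReal s ^ n ≤ volume A := by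
  have hsub : Set.pi Set.univ (fun i => Set.Icc (x i) (x i + s)) ⊆ A := by
    intro y hy
    rw [Set.mem_univ_pi] at hy
    have hb : (y - x) ∈ cube n s := by
      intro i
      have := hy i
      rw [Set.mem_Icc] at this
      exact ⟨by simpa using sub_nonneg.mpr this.1, by simpa using sub_le_iff_le_add'.mpr this.2⟩
    have := hx (y - x) hb
    simpa using this
  calc ENNReal.ofReal s ^ n = volume (Set.pi Set.univ fun i => Set.Icc (x i) (x i + s)) := by
        rw [volume_pi_pi]
        simp [Real.volume_Icc]
    _ ≤ volume A := measure_mono hsub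

lemma final_numeric (n : ℕ) (hn : 2 ≤ n) : Real.logb 2 (n : ℝ) + (n : ℝ) / Real.log 2 ≤ 2*(n:ℝ) + 1 := by
  have hL : (0.6931471803:ℝ) < Real.log 2 := Real.log_two_gt_d9
  have hL0 : (0:ℝ) < Real.log 2 := by linarith
  have hn1 : (1:ℝ) ≤ (n:ℝ) := by exact_mod_cast Nat.one_le_of_lt hn
  have hnpos : (0:ℝ) < (n:ℝ) := by linarith
  set u := Real.sqrt (n:ℝ) with hu
  have hu0 : 0 ≤ u := Real.sqrt_nonneg _
  have hu1 : 1 ≤ u := by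
    rw [hu, show (1:ℝ) = Real.sqrt 1 by simp]
    exact Real.sqrt_le_sqrt hn1
  have hsq : u ^ 2 = (n:ℝ) := Real.sq_sqrt (le_of_lt hnpos)
  have hlogu : Real.log (n:ℝ) / 2 ≤ u - 1 := by
    rw [← Real.log_sqrt (le_of_lt hnpos)]
    exact Real.log_le_sub_one_of_pos (by positivity)
  have hlog : Real.log (n:ℝ) ≤ 2*u - 2 := by linarith
  rw [Real.logb, ← add_div, div_le_iff₀ hL0]
  have key : (2*u - 2) + (n:ℝ) ≤ (2*(n:ℝ) + 1) * 0.6931471803 := by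
    rw [← hsq]
    nlinarith [sq_nonneg (u - 2.59), hu1]
  have h2 : (2*(n:ℝ) + 1) * 0.6931471803 ≤ (2*(n:ℝ) + 1) * Real.log 2 := by
    apply mul_le_mul_of_nonneg_left (le_of_lt hL)
    linarith
  linarith

end Stmt18

open Stmt18 Set

set_option maxHeartbeats 2000000

/-- For `A ⊆ ℝⁿ` (`n ≥ 2`) orthogonally convex of finite positive measure, with `X` uniform
on `A`: `h_{⊖[0,1]ⁿ}(A) ≤ (n-1) log₂ E[‖X‖_∞] - log₂ Vₙ(A) + 4n`. -/
theorem stmt_18 (n : ℕ) (hn : 2 ≤ n) (A : Set (Fin n → ℝ)) (hA : MeasurableSet A)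
    (hoc : OrthoConvex n A) (h0 : 0 < volume A) (hfin : volume A ≠ ⊤)
    (hInt : IntegrableOn (fun x => ‖x‖) A volume) :
    erosionEntropy n A ≤
      ((n : ℝ) - 1) * Real.logb 2 ((∫ x in A, ‖x‖ ∂volume) / (volume A).toReal)
        - Real.logb 2 (volume A).toReal + 4 * n := by
  classical
  have hnpos : 0 < n := by omega
  have hn0 : (n:ℝ) ≠ 0 := by positivity
  have hnR : (0:ℝ) < n := by positivity
  set V : ℝ := (volume A).toReal with hVdef
  have hV : 0 < V := ENNReal.toReal_pos (ne_of_gt h0) hfin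
  set I : ℝ := ∫ x in A, ‖x‖ ∂volume with hIdef
  -- positivity of the mean
  have hIpos : 0 < I := by
    have h01 : volume ({(0 : Fin n → ℝ)} : Set _) = 0 := by
      have he : ({(0 : Fin n → ℝ)} : Set (Fin n → ℝ))
          = Set.pi Set.univ (fun _ => ({0} : Set ℝ)) := by
        ext x
        simp [Set.mem_univ_pi, funext_iff]
      rw [he, volume_pi_pi]
      simp only [Real.volume_singleton]
      rw [Finset.prod_const, Finset.card_univ, Fintype.card_fin]
      exact zero_pow (by omega)
    rw [hIdef, integral_pos_iff_support_of_nonneg (fun x => norm_nonneg x) hInt]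
    have hsupp : Function.support (fun x : Fin n → ℝ => ‖x‖) = {(0 : Fin n → ℝ)}ᶜ := by
      ext x
      simp [Function.support]
    rw [hsupp, Measure.restrict_apply (measurableSet_singleton _).compl]
    have hge : volume A ≤ volume (({(0 : Fin n → ℝ)}ᶜ : Set _) ∩ A) := by
      calc volume A ≤ volume ((({(0:Fin n → ℝ)}ᶜ : Set _) ∩ A) ∪ {(0 : Fin n → ℝ)}) := by
            refine measure_mono ?_
            intro x hx
            by_cases h : x = 0
            · right; simp [h]
            · left; exact ⟨h, hx⟩
        _ ≤ volume (({(0:Fin n → ℝ)}ᶜ : Set _) ∩ A) + volume ({(0 : Fin n → ℝ)} : Set _) :=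
            measure_union_le _ _
        _ = volume (({(0:Fin n → ℝ)}ᶜ : Set _) ∩ A) := by rw [h01, add_zero]
    exact lt_of_lt_of_le h0 hge
  set M : ℝ := I / V with hMdef
  have hM : 0 < M := div_pos hIpos hV
  set K : ℝ := n * (2*M)^(n-1) / V with hKdef
  have hK : 0 < K := by
    rw [hKdef]; positivity
  set C : ℝ := 2 * K ^ (1/(n:ℝ)) with hCdef
  have hKr : 0 < K ^ (1/(n:ℝ)) := Real.rpow_pos_of_pos hK _
  have hC : 0 < C := by rw [hCdef]; positivity
  set a : ℝ := Real.log 2 / n with hadef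
  have hL0 : (0:ℝ) < Real.log 2 := Real.log_pos (by norm_num)
  have ha : 0 < a := by rw [hadef]; positivity
  -- the ratio function
  set r : ℝ → ℝ := fun t =>
    (volume (erosion A (cube n ((2:ℝ) ^ (-t))))).toReal / V with hrdef
  have hEE : erosionEntropy n A = ∫ t : ℝ, ((if 0 ≤ t then (1:ℝ) else 0) - r t) := rfl
  -- basic facts about r
  have hcube0 : ∀ t : ℝ, (0 : Fin n → ℝ) ∈ cube n ((2:ℝ) ^ (-t)) := by
    intro t i
    exact ⟨le_refl 0, le_of_lt (Real.rpow_pos_of_pos (by norm_num) _)⟩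
  have hEroSub : ∀ t : ℝ, erosion A (cube n ((2:ℝ) ^ (-t))) ⊆ A := by
    intro t x hx
    have := hx 0 (hcube0 t)
    simpa using this
  have hEroFin : ∀ t : ℝ, volume (erosion A (cube n ((2:ℝ) ^ (-t)))) ≠ ⊤ :=
    fun t => ne_top_of_le_ne_top hfin (measure_mono (hEroSub t))
  have hr0 : ∀ t, 0 ≤ r t := fun t => div_nonneg ENNReal.toReal_nonneg (le_of_lt hV)
  have hr1 : ∀ t, r t ≤ 1 := by
    intro t
    rw [hrdef]
    rw [div_le_one hV]
    exact ENNReal.toReal_mono hfin (measure_mono (hEroSub t))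
  have hrmono : Monotone r := by
    intro t t' htt
    have hcube : cube n ((2:ℝ) ^ (-t')) ⊆ cube n ((2:ℝ) ^ (-t)) := by
      intro b hb i
      refine ⟨(hb i).1, le_trans (hb i).2 ?_⟩
      exact Real.rpow_le_rpow_left_iff (by norm_num : (1:ℝ) < 2) |>.mpr (by linarith)
    have hero : erosion A (cube n ((2:ℝ) ^ (-t))) ⊆ erosion A (cube n ((2:ℝ) ^ (-t'))) :=
      fun x hx b hb => hx b (hcube hb)
    simp only [hrdef]
    exact (div_le_div_iff_of_pos_right hV).mpr (ENNReal.toReal_mono (hEroFin t') (measure_mono hero))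
  -- the key lower bound on r
  have hrlb : ∀ t : ℝ, 1 - C * Real.exp (-a*t) ≤ r t := by
    intro t
    set s : ℝ := (2:ℝ) ^ (-t) with hsdef
    have hs : 0 < s := Real.rpow_pos_of_pos (by norm_num) _
    set θ : ℝ := (s*K) ^ (1/(n:ℝ)) with hθdef
    have hθ : 0 < θ := Real.rpow_pos_of_pos (by positivity) _
    set R : ℝ := M/θ with hRdef
    have hR : 0 < R := div_pos hM hθ
    have hθn : θ ^ n = s * K := by
      rw [hθdef, ← Real.rpow_natCast ((s*K) ^ (1/(n:ℝ))) n, ← Real.rpow_mul (by positivity)]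
      rw [one_div, inv_mul_cancel₀ hn0, Real.rpow_one]
    have hcore := core_ineq (n := n) hA hoc hR hs
    -- convert to reals
    have hE1fin : volume (erosion A (cube n s)) ≠ ⊤ := hEroFin t
    have hE2fin : volume (A \ box n R) ≠ ⊤ :=
      ne_top_of_le_ne_top hfin (measure_mono Set.diff_subset)
    have hE3fin : ((n : ℝ≥0∞) * ENNReal.ofReal (s * (2*R)^(n-1))) ≠ ⊤ :=
      ENNReal.mul_ne_top (ENNReal.natCast_ne_top n) ENNReal.ofReal_ne_top
    have hsumfin : volume (erosion A (cube n s)) + volume (A \ box n R)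
        + (n : ℝ≥0∞) * ENNReal.ofReal (s * (2*R)^(n-1)) ≠ ⊤ := by
      exact ENNReal.add_ne_top.mpr ⟨ENNReal.add_ne_top.mpr ⟨hE1fin, hE2fin⟩, hE3fin⟩
    have hreal : V ≤ (volume (erosion A (cube n s))).toReal
        + (volume (A \ box n R)).toReal + (n:ℝ) * (s * (2*R)^(n-1)) := by
      have h1 := ENNReal.toReal_mono hsumfin hcore
      rw [ENNReal.toReal_add (ENNReal.add_ne_top.mpr ⟨hE1fin, hE2fin⟩) hE3fin,
        ENNReal.toReal_add hE1fin hE2fin, ENNReal.toReal_mul, ENNReal.toReal_natCast,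
        ENNReal.toReal_ofReal (by positivity)] at h1
      exact h1
    have hmark := markov (n := n) hA hfin hInt hR
    -- algebraic identities
    have hIR : I / R = V * θ := by
      rw [hRdef, div_div_eq_mul_div, hMdef]
      field_simp
    have hterm3 : (n:ℝ) * (s * (2*R)^(n-1)) = V * θ := by
      have hKV : (n:ℝ) * (2*M)^(n-1) = K * V := by
        rw [hKdef]; field_simp
      have h2R : (2*R)^(n-1) = (2*M)^(n-1) / θ^(n-1) := by
        rw [hRdef]
        rw [show 2 * (M/θ) = (2*M)/θ by ring, div_pow]
      rw [h2R]
      have hθsplit : θ ^ n = θ^(n-1) * θ := by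
        conv_lhs => rw [show n = (n-1)+1 by omega]
        rw [pow_succ]
      have hθ1 : (0:ℝ) < θ^(n-1) := by positivity
      have e1 : (n:ℝ) * (s * ((2*M)^(n-1) / θ^(n-1))) = (s * ((n:ℝ)*(2*M)^(n-1))) / θ^(n-1) := by
        ring
      have e2 : s * (K*V) = θ^(n-1) * (θ * V) := by
        rw [← mul_assoc, ← hθn, hθsplit]; ring
      rw [e1, hKV, e2, mul_div_cancel_left₀ _ (ne_of_gt hθ1)]
      ring
    have hrt : (volume (erosion A (cube n s))).toReal = r t * V := by
      rw [hrdef]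
      field_simp
      rfl
    have hfinal : V ≤ r t * V + V * θ + V * θ := by
      calc V ≤ (volume (erosion A (cube n s))).toReal
            + (volume (A \ box n R)).toReal + (n:ℝ) * (s * (2*R)^(n-1)) := hreal
        _ ≤ r t * V + I/R + V * θ := by
            rw [hrt, hterm3]
            have := hmark
            linarith
        _ = r t * V + V * θ + V * θ := by rw [hIR]
    -- identify 2θ with C * exp(-a t)
    have hsr : s ^ (1/(n:ℝ)) = Real.exp (-a*t) := by
      rw [hsdef, ← Real.rpow_mul (by norm_num : (0:ℝ) ≤ 2)]
      rw [Real.rpow_def_of_pos (by norm_num : (0:ℝ) < 2)]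
      congr 1
      rw [hadef]
      field_simp
    have hθC : 2 * θ = C * Real.exp (-a*t) := by
      rw [hθdef, Real.mul_rpow (le_of_lt hs) (le_of_lt hK), hCdef, hsr]
      ring
    nlinarith [hfinal, hV]
  -- r vanishes for very negative t
  have ht₀ : ∀ t : ℝ, t < -(Real.logb 2 V)/n → r t = 0 := by
    intro t ht
    have hs : 0 < (2:ℝ)^(-t) := Real.rpow_pos_of_pos (by norm_num) _
    have hsV : V < ((2:ℝ)^(-t))^n := by
      have h1 : Real.logb 2 V < n * (-t) := by
        have := ht
        rw [lt_div_iff₀ hnR] at this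
        nlinarith
      have h2 : ((2:ℝ)^(-t))^n = (2:ℝ)^((-t)*(n:ℝ)) := by
        rw [← Real.rpow_natCast ((2:ℝ)^(-t)) n, ← Real.rpow_mul (by norm_num : (0:ℝ) ≤ 2)]
      rw [h2]
      calc V = (2:ℝ) ^ (Real.logb 2 V) := (Real.rpow_logb (by norm_num) (by norm_num) hV).symm
        _ < (2:ℝ) ^ ((-t)*(n:ℝ)) := by
            apply Real.rpow_lt_rpow_left_iff (by norm_num : (1:ℝ) < 2) |>.mpr
            nlinarith
    have hempty : erosion A (cube n ((2:ℝ)^(-t))) = ∅ := by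
      by_contra hne
      obtain ⟨x, hx⟩ := Set.nonempty_iff_ne_empty.mpr hne
      have := vol_le_of_mem_erosion (n := n) (le_of_lt hs) hx
      rw [← ENNReal.ofReal_pow (le_of_lt hs)] at this
      have hVA : volume A = ENNReal.ofReal V := (ENNReal.ofReal_toReal hfin).symm
      rw [hVA] at this
      rw [ENNReal.ofReal_le_ofReal_iff (le_of_lt hV)] at this
      linarith
    rw [hrdef]
    simp [hempty]
  -- comparison function h
  set TC : ℝ := (n:ℝ) * Real.logb 2 C with hTCdef
  have hCexpTC : C * Real.exp (-a * TC) = 1 := by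
    have haTC : a * TC = Real.log C := by
      rw [hadef, hTCdef, Real.logb]
      field_simp
    rw [show -a*TC = -(a*TC) by ring, haTC, Real.exp_neg, Real.exp_log hC]
    field_simp
  have hkey : ∀ t : ℝ, C * Real.exp (-a*t) ≤ 1 ↔ TC ≤ t := by
    intro t
    rw [← hCexpTC, mul_le_mul_iff_of_pos_left hC, Real.exp_le_exp]
    constructor
    · intro h; nlinarith
    · intro h; nlinarith
  set h : ℝ → ℝ := fun t => (if 0 ≤ t then (1:ℝ) else 0) - max 0 (1 - C * Real.exp (-a*t))
    with hhdef
  have hgh : ∀ t, ((if 0 ≤ t then (1:ℝ) else 0) - r t) ≤ h t := by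
    intro t
    refine sub_le_sub_left ?_ _
    exact max_le (hr0 t) (by linarith [hrlb t])
  set φ₂ : ℝ → ℝ := Set.indicator (Set.Ici TC) (fun t => C * Real.exp (-a*t)) with hφ₂def
  have hφ₂int : Integrable φ₂ := by
    rw [hφ₂def, integrable_indicator_iff measurableSet_Ici]
    exact Iff.mpr integrableOn_Ici_iff_integrableOn_Ioi
      (Integrable.const_mul (exp_neg_integrableOn_Ioi TC ha) C)
  have hIoi : ∫ t in Set.Ioi TC, Real.exp (-a*t) = a⁻¹ * Real.exp (-(a*TC)) := by
    have h2 := integral_comp_mul_left_Ioi (fun u => Real.exp (-u)) TC ha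
    rw [integral_exp_neg_Ioi] at h2
    simpa [neg_mul, smul_eq_mul] using h2
  have hφ₂val : ∫ t, φ₂ t = a⁻¹ := by
    rw [hφ₂def, integral_indicator measurableSet_Ici, integral_Ici_eq_integral_Ioi,
      MeasureTheory.integral_const_mul, hIoi]
    have e : C * (a⁻¹ * Real.exp (-(a*TC))) = a⁻¹ * (C * Real.exp (-a*TC)) := by ring
    rw [e, hCexpTC, mul_one]
  have hIH : Integrable h ∧ (∫ t, h t) = TC + a⁻¹ := by
    rcases le_or_gt TC 0 with hTC | hTC
    · set φ₁ : ℝ → ℝ := fun t => -(Set.indicator (Set.Ico TC 0) (fun _ => (1:ℝ)) t) with hφ₁def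
      have hsum : h = fun t => φ₁ t + φ₂ t := by
        funext t
        simp only [hhdef, hφ₁def, hφ₂def]
        by_cases ht0 : 0 ≤ t
        · have hTCt : TC ≤ t := le_trans hTC ht0
          have hu : C * Real.exp (-a*t) ≤ 1 := (hkey t).mpr hTCt
          rw [if_pos ht0,
            Set.indicator_of_notMem (fun hm => (not_lt.mpr ht0) hm.2) _,
            Set.indicator_of_mem (Set.mem_Ici.mpr hTCt),
            max_eq_right (sub_nonneg.mpr hu)]
          ring
        · by_cases hTCt : TC ≤ t
          · have hu : C * Real.exp (-a*t) ≤ 1 := (hkey t).mpr hTCt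
            rw [if_neg ht0,
              Set.indicator_of_mem (Set.mem_Ico.mpr ⟨hTCt, not_le.mp ht0⟩),
              Set.indicator_of_mem (Set.mem_Ici.mpr hTCt),
              max_eq_right (sub_nonneg.mpr hu)]
            ring
          · have hu : 1 < C * Real.exp (-a*t) := lt_of_not_ge (fun hc => hTCt ((hkey t).mp hc))
            rw [if_neg ht0,
              Set.indicator_of_notMem (fun hm => hTCt (Set.mem_Ico.mp hm).1) _,
              Set.indicator_of_notMem (fun hm => hTCt (Set.mem_Ici.mp hm)) _,
              max_eq_left (by linarith)]
            ring
      have hφ₁int : Integrable φ₁ := by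
        rw [hφ₁def]
        apply Integrable.neg
        rw [integrable_indicator_iff measurableSet_Ico]
        exact Iff.mpr integrableOn_const_iff (Or.inr measure_Ico_lt_top)
      have hφ₁val : ∫ t, φ₁ t = TC := by
        simp only [hφ₁def]
        rw [integral_neg, integral_indicator measurableSet_Ico, setIntegral_const, smul_eq_mul,
          mul_one, Real.volume_real_Ico_of_le (by linarith)]
        ring
      constructor
      · rw [hsum]; exact hφ₁int.add hφ₂int
      · rw [hsum, integral_add hφ₁int hφ₂int, hφ₁val, hφ₂val]
    · set φ₁ : ℝ → ℝ := Set.indicator (Set.Ico 0 TC) (fun _ => (1:ℝ)) with hφ₁def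
      have hsum : h = fun t => φ₁ t + φ₂ t := by
        funext t
        simp only [hhdef, hφ₁def, hφ₂def]
        by_cases ht0 : 0 ≤ t
        · by_cases hTCt : TC ≤ t
          · have hu : C * Real.exp (-a*t) ≤ 1 := (hkey t).mpr hTCt
            rw [if_pos ht0,
              Set.indicator_of_notMem (fun hm => (not_lt.mpr hTCt) (Set.mem_Ico.mp hm).2) _,
              Set.indicator_of_mem (Set.mem_Ici.mpr hTCt),
              max_eq_right (sub_nonneg.mpr hu)]
            ring
          · have hu : 1 < C * Real.exp (-a*t) := lt_of_not_ge (fun hc => hTCt ((hkey t).mp hc))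
            rw [if_pos ht0,
              Set.indicator_of_mem (Set.mem_Ico.mpr ⟨ht0, not_le.mp hTCt⟩),
              Set.indicator_of_notMem (fun hm => hTCt (Set.mem_Ici.mp hm)) _,
              max_eq_left (by linarith)]
            ring
        · have hTCt : ¬ TC ≤ t := fun hc => ht0 (le_trans (le_of_lt hTC) hc)
          have hu : 1 < C * Real.exp (-a*t) := lt_of_not_ge (fun hc => hTCt ((hkey t).mp hc))
          rw [if_neg ht0,
            Set.indicator_of_notMem (fun hm => ht0 (Set.mem_Ico.mp hm).1) _,
            Set.indicator_of_notMem (fun hm => hTCt (Set.mem_Ici.mp hm)) _,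
            max_eq_left (by linarith)]
          ring
      have hφ₁int : Integrable φ₁ := by
        rw [hφ₁def, integrable_indicator_iff measurableSet_Ico]
        exact Iff.mpr integrableOn_const_iff (Or.inr measure_Ico_lt_top)
      have hφ₁val : ∫ t, φ₁ t = TC := by
        simp only [hφ₁def]
        rw [integral_indicator measurableSet_Ico, setIntegral_const, smul_eq_mul,
          mul_one, Real.volume_real_Ico_of_le (by linarith)]
        ring
      constructor
      · rw [hsum]; exact hφ₁int.add hφ₂int
      · rw [hsum, integral_add hφ₁int hφ₂int, hφ₁val, hφ₂val]
  obtain ⟨hhint, hhval⟩ := hIH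
  -- integrability of the entropy integrand
  have hgmeas : Measurable (fun t : ℝ => (if 0 ≤ t then (1:ℝ) else 0) - r t) := by
    apply Measurable.sub
    · exact Measurable.ite measurableSet_Ici measurable_const measurable_const
    · exact hrmono.measurable
  set t₀ : ℝ := min 0 (-(Real.logb 2 V)/n) with ht₀def
  set bnd : ℝ → ℝ := fun t => Set.indicator (Set.Ico t₀ 0) (fun _ => (1:ℝ)) t
      + Set.indicator (Set.Ici 0) (fun t => C * Real.exp (-a*t)) t with hbnddef
  have hbnd : ∀ t, |(if 0 ≤ t then (1:ℝ) else 0) - r t| ≤ bnd t := by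
    intro t
    rcases le_or_gt 0 t with ht0 | ht0
    · simp only [hbnddef, if_pos ht0]
      rw [abs_of_nonneg (by linarith [hr1 t]),
        Set.indicator_of_notMem (fun hm => (not_lt.mpr ht0) hm.2) _,
        Set.indicator_of_mem (Set.mem_Ici.mpr ht0)]
      have := hrlb t
      linarith
    · simp only [hbnddef, if_neg (not_le.mpr ht0)]
      rw [zero_sub, abs_neg, abs_of_nonneg (hr0 t),
        Set.indicator_of_notMem (fun hm => (not_le.mpr ht0) (Set.mem_Ici.mp hm)) _, add_zero]
      rcases le_or_gt t₀ t with ht1 | ht1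
      · rw [Set.indicator_of_mem (Set.mem_Ico.mpr ⟨ht1, ht0⟩)]
        exact hr1 t
      · have hz : r t = 0 := ht₀ t (lt_of_lt_of_le ht1 (min_le_right _ _))
        rw [hz, Set.indicator_of_notMem (fun hm => (not_le.mpr ht1) (Set.mem_Ico.mp hm).1) _]
  have hbndint : Integrable bnd := by
    rw [hbnddef]
    apply Integrable.add
    · rw [integrable_indicator_iff measurableSet_Ico]
      exact Iff.mpr integrableOn_const_iff (Or.inr measure_Ico_lt_top)
    · rw [integrable_indicator_iff measurableSet_Ici]
      exact Iff.mpr integrableOn_Ici_iff_integrableOn_Ioi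
        (Integrable.const_mul (exp_neg_integrableOn_Ioi 0 ha) C)
  have hgint : Integrable (fun t : ℝ => (if 0 ≤ t then (1:ℝ) else 0) - r t) :=
    Integrable.mono' hbndint hgmeas.aestronglyMeasurable (Filter.Eventually.of_forall hbnd)
  have hmain : erosionEntropy n A ≤ TC + a⁻¹ := by
    rw [hEE, ← hhval]
    exact integral_mono hgint hhint hgh
  -- final arithmetic
  have hainv : a⁻¹ = (n:ℝ) / Real.log 2 := by
    rw [hadef, inv_div]
  have hlogbK : Real.logb 2 K
      = Real.logb 2 (n:ℝ) + ((n:ℝ)-1)*(1 + Real.logb 2 M) - Real.logb 2 V := by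
    rw [hKdef, Real.logb_div (by positivity) (ne_of_gt hV), Real.logb_mul hn0 (by positivity),
      Real.logb_pow, Real.logb_mul two_ne_zero (ne_of_gt hM),
      Real.logb_self_eq_one (by norm_num)]
    rw [Nat.cast_sub (by omega : 1 ≤ n)]
    push_cast
    ring
  have hTCval : TC = (n:ℝ) + Real.logb 2 K := by
    have h1 : Real.logb 2 (K ^ (1/(n:ℝ))) = (1/(n:ℝ)) * Real.logb 2 K := by
      rw [Real.logb, Real.logb, Real.log_rpow hK]
      ring
    rw [hTCdef, hCdef, Real.logb_mul two_ne_zero (ne_of_gt hKr), h1,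
      Real.logb_self_eq_one (by norm_num)]
    field_simp
  have hnum := final_numeric n hn
  have hRHS : TC + a⁻¹ ≤ ((n:ℝ)-1) * Real.logb 2 M - Real.logb 2 V + 4*(n:ℝ) := by
    rw [hTCval, hlogbK, hainv]
    have hexpand : ((n:ℝ)-1)*(1 + Real.logb 2 M)
        = ((n:ℝ)-1) + ((n:ℝ)-1) * Real.logb 2 M := by ring
    rw [hexpand]
    linarith
  calc erosionEntropy n A ≤ TC + a⁻¹ := hmain
    _ ≤ ((n:ℝ)-1) * Real.logb 2 M - Real.logb 2 V + 4*(n:ℝ) := hRHS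
    _ = ((n:ℝ)-1) * Real.logb 2 M - Real.logb 2 V + 4*(n:ℝ) := rfl
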